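/- arXiv:2203.12959 — 2 statements merged into one kernel-verified Lean document; each statement's English description precedes it below -/
import Mathlib

section
/- Let Π ∈ Π_{q,r} and assume the generalized Schur complement Π|Π₂₂ is positive definite. Then Z ∈ Z_r⁺(Π) if and only if Z = −Π₂₂^† Π₂₁ + ((−Π₂₂)^†)^{1/2} S (Π|Π₂₂)^{1/2} + (I_r − Π₂₂^† Π₂₂) T for some matrices S, T ∈ ℝ^{r×q} with SᵀS ≺ I_q. Here M^{1/2} denotes the unique positive semidefinite square root of a positive semidefinite matrix M. -/
open Matrix
open scoped Classical

/-- The Moore–Penrose pseudoinverse of a real matrix, defined via its four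
characterizing Penrose conditions (which determine it uniquely). -/
noncomputable def pinv {m n : ℕ} (A : Matrix (Fin m) (Fin n) ℝ) : Matrix (Fin n) (Fin m) ℝ :=
  if h : ∃ B : Matrix (Fin n) (Fin m) ℝ,
      A * B * A = A ∧ B * A * B = B ∧ (A * B)ᵀ = A * B ∧ (B * A)ᵀ = B * A
  then h.choose else 0

/-- The unique positive semidefinite square root of a positive semidefinite matrix
(defined by its characterizing property, which determines it uniquely). -/
noncomputable def msqrt {n : ℕ} (A : Matrix (Fin n) (Fin n) ℝ) : Matrix (Fin n) (Fin n) ℝ :=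
  if h : ∃ B : Matrix (Fin n) (Fin n) ℝ, B.PosSemidef ∧ B * B = A then h.choose else 0

/-- The quadratic matrix expression `[I; Z]ᵀ Π [I; Z]`. -/
noncomputable def qmi {q r : ℕ} (P : Matrix (Fin q ⊕ Fin r) (Fin q ⊕ Fin r) ℝ)
    (Z : Matrix (Fin r) (Fin q) ℝ) : Matrix (Fin q) (Fin q) ℝ :=
  (fromRows (1 : Matrix (Fin q) (Fin q) ℝ) Z)ᵀ * P * fromRows 1 Z

/-- The solution set `Z_r(Π)` of the nonstrict QMI. -/
def ZrSet {q r : ℕ} (P : Matrix (Fin q ⊕ Fin r) (Fin q ⊕ Fin r) ℝ) :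
    Set (Matrix (Fin r) (Fin q) ℝ) := {Z | (qmi P Z).PosSemidef}

/-- The solution set `Z_r⁺(Π)` of the strict QMI. -/
def ZrPlusSet {q r : ℕ} (P : Matrix (Fin q ⊕ Fin r) (Fin q ⊕ Fin r) ℝ) :
    Set (Matrix (Fin r) (Fin q) ℝ) := {Z | (qmi P Z).PosDef}

/-- The solution set `Z_r⁰(Π)` of the quadratic matrix equality. -/
def ZrZeroSet {q r : ℕ} (P : Matrix (Fin q ⊕ Fin r) (Fin q ⊕ Fin r) ℝ) :
    Set (Matrix (Fin r) (Fin q) ℝ) := {Z | qmi P Z = 0}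

/-- Generalized Schur complement `Π|Π₂₂ = Π₁₁ − Π₁₂ Π₂₂^† Π₂₁`. -/
noncomputable def schurC {q r : ℕ} (P : Matrix (Fin q ⊕ Fin r) (Fin q ⊕ Fin r) ℝ) :
    Matrix (Fin q) (Fin q) ℝ :=
  P.toBlocks₁₁ - P.toBlocks₁₂ * pinv P.toBlocks₂₂ * P.toBlocks₂₁

/-- Membership in the class `Π_{q,r}`: symmetric, `Π₂₂ ⪯ 0`, `Π|Π₂₂ ⪰ 0`,
and `ker Π₂₂ ⊆ ker Π₁₂`. -/
def memPi {q r : ℕ} (P : Matrix (Fin q ⊕ Fin r) (Fin q ⊕ Fin r) ℝ) : Prop :=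
  P.IsSymm ∧ (-P.toBlocks₂₂).PosSemidef ∧ (schurC P).PosSemidef ∧
    ∀ x : Fin r → ℝ, P.toBlocks₂₂ *ᵥ x = 0 → P.toBlocks₁₂ *ᵥ x = 0

section helperlemmas

lemma penrose_unique {m n : ℕ} {A : Matrix (Fin m) (Fin n) ℝ} {B C : Matrix (Fin n) (Fin m) ℝ}
    (hB : A * B * A = A ∧ B * A * B = B ∧ (A * B)ᵀ = A * B ∧ (B * A)ᵀ = B * A)
    (hC : A * C * A = A ∧ C * A * C = C ∧ (A * C)ᵀ = A * C ∧ (C * A)ᵀ = C * A) :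
    B = C := by
  obtain ⟨b1, b2, b3, b4⟩ := hB
  obtain ⟨c1, c2, c3, c4⟩ := hC
  have hBAC : B = B * (A * C) := by
    calc B = B * A * B := b2.symm
    _ = B * (A * B)ᵀ := by rw [b3, Matrix.mul_assoc]
    _ = B * Bᵀ * Aᵀ := by rw [Matrix.transpose_mul, Matrix.mul_assoc]
    _ = B * Bᵀ * (A * C * A)ᵀ := by rw [c1]
    _ = B * (A * B)ᵀ * (A * C)ᵀ := by
        simp only [Matrix.transpose_mul, Matrix.mul_assoc]
    _ = B * (A * B) * (A * C) := by rw [b3, c3]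
    _ = B * (A * C) := by rw [← Matrix.mul_assoc, ← Matrix.mul_assoc, b2, Matrix.mul_assoc]
  have hCAC : C = (B * A) * C := by
    calc C = C * A * C := c2.symm
    _ = (C * A)ᵀ * C := by rw [c4]
    _ = Aᵀ * Cᵀ * C := by rw [Matrix.transpose_mul]
    _ = (A * B * A)ᵀ * Cᵀ * C := by rw [b1]
    _ = (B * A)ᵀ * ((C * A)ᵀ * C) := by
        simp only [Matrix.transpose_mul, Matrix.mul_assoc]
    _ = B * A * (C * A * C) := by rw [b4, c4, Matrix.mul_assoc]
    _ = (B * A) * C := by rw [c2]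
  rw [hBAC, ← Matrix.mul_assoc, ← hCAC]

lemma pinv_eq {m n : ℕ} {A : Matrix (Fin m) (Fin n) ℝ} {B : Matrix (Fin n) (Fin m) ℝ}
    (h1 : A * B * A = A) (h2 : B * A * B = B) (h3 : (A * B)ᵀ = A * B) (h4 : (B * A)ᵀ = B * A) :
    pinv A = B := by
  have hex : ∃ B : Matrix (Fin n) (Fin m) ℝ,
      A * B * A = A ∧ B * A * B = B ∧ (A * B)ᵀ = A * B ∧ (B * A)ᵀ = B * A := ⟨B, h1, h2, h3, h4⟩
  rw [pinv, dif_pos hex]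
  exact penrose_unique hex.choose_spec ⟨h1, h2, h3, h4⟩

lemma msqrt_eq {n : ℕ} {A B : Matrix (Fin n) (Fin n) ℝ} (hB : B.PosSemidef) (h : B * B = A) :
    msqrt A = B := by
  have hex : ∃ B : Matrix (Fin n) (Fin n) ℝ, B.PosSemidef ∧ B * B = A := ⟨B, hB, h⟩
  rw [msqrt, dif_pos hex]
  obtain ⟨hC, hC2⟩ := hex.choose_spec
  have hA : A.PosSemidef := by
    rw [← h, ← pow_two]; exact hB.pow 2
  open scoped MatrixOrder in
  rw [← CFC.sqrt_unique hC2 hC.nonneg, ← CFC.sqrt_unique h hB.nonneg]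

lemma psd_conj {n m : ℕ} {A : Matrix (Fin n) (Fin n) ℝ} (hA : A.PosSemidef)
    (B : Matrix (Fin n) (Fin m) ℝ) : (Bᵀ * A * B).PosSemidef := by
  have := hA.conjTranspose_mul_mul_same B
  rwa [conjTranspose_eq_transpose_of_trivial] at this

lemma pd_conj {n : ℕ} {A B : Matrix (Fin n) (Fin n) ℝ} (hA : A.PosDef)
    (hB : IsUnit B.det) : (Bᵀ * A * B).PosDef := by
  refine posDef_iff_dotProduct_mulVec.mpr ⟨?_, ?_⟩
  · have h := hA.1
    rw [IsHermitian, conjTranspose_eq_transpose_of_trivial] at h ⊢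
    rw [transpose_mul, transpose_mul, transpose_transpose, h, Matrix.mul_assoc]
  · intro x hx
    have hBx : B *ᵥ x ≠ 0 := by
      intro h0
      apply hx
      have := congrArg (fun v => B⁻¹ *ᵥ v) h0
      simpa [mulVec_mulVec, Matrix.nonsing_inv_mul B hB] using this
    have := hA.dotProduct_mulVec_pos hBx
    simpa [Matrix.mul_assoc, ← mulVec_mulVec, dotProduct_mulVec, vecMul_transpose] using this

lemma posDef_of_sq {n : ℕ} {B : Matrix (Fin n) (Fin n) ℝ} (hB : B.PosSemidef)
    (h : (B * B).PosDef) : B.PosDef := by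
  refine posDef_iff_dotProduct_mulVec.mpr ⟨hB.1, fun x hx => ?_⟩
  rcases lt_or_eq_of_le (hB.dotProduct_mulVec_nonneg x) with h' | h'
  · exact h'
  · exfalso
    have hz : B *ᵥ x = 0 := (hB.dotProduct_mulVec_zero_iff x).mp h'.symm
    have := h.dotProduct_mulVec_pos hx
    rw [← mulVec_mulVec, hz, mulVec_zero, dotProduct_zero] at this
    exact lt_irrefl 0 this

lemma psd_spectral {r : ℕ} {N : Matrix (Fin r) (Fin r) ℝ} (hN : N.PosSemidef) :
    ∃ (U : Matrix (Fin r) (Fin r) ℝ) (d : Fin r → ℝ), (∀ i, 0 ≤ d i) ∧ U * Uᵀ = 1 ∧ Uᵀ * U = 1 ∧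
      N = U * diagonal d * Uᵀ := by
  refine ⟨hN.1.eigenvectorUnitary, hN.1.eigenvalues, fun i => hN.eigenvalues_nonneg i, ?_, ?_, ?_⟩
  · have := (Matrix.mem_unitaryGroup_iff).mp hN.1.eigenvectorUnitary.2
    rwa [star_eq_conjTranspose, conjTranspose_eq_transpose_of_trivial] at this
  · have := (Matrix.mem_unitaryGroup_iff').mp hN.1.eigenvectorUnitary.2
    rwa [star_eq_conjTranspose, conjTranspose_eq_transpose_of_trivial] at this
  · have := hN.1.spectral_theorem
    rwa [Unitary.conjStarAlgAut_apply, star_eq_conjTranspose, conjTranspose_eq_transpose_of_trivial,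
      RCLike.ofReal_real_eq_id, Function.id_comp] at this

noncomputable def Cg {r : ℕ} (U : Matrix (Fin r) (Fin r) ℝ) (f : Fin r → ℝ) :
    Matrix (Fin r) (Fin r) ℝ := U * Matrix.diagonal f * Uᵀ

variable {r : ℕ} {U : Matrix (Fin r) (Fin r) ℝ}

lemma Cg_mul (hUtU : Uᵀ * U = 1) (f g : Fin r → ℝ) :
    Cg U f * Cg U g = Cg U (fun i => f i * g i) := by
  unfold Cg
  calc U * diagonal f * Uᵀ * (U * diagonal g * Uᵀ)
      = U * diagonal f * (Uᵀ * U) * (diagonal g * Uᵀ) := by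
        simp only [Matrix.mul_assoc]
    _ = U * (diagonal f * diagonal g) * Uᵀ := by
        rw [hUtU, Matrix.mul_one]
        simp only [Matrix.mul_assoc]
    _ = U * diagonal (fun i => f i * g i) * Uᵀ := by
        rw [diagonal_mul_diagonal]

lemma Cg_transpose (f : Fin r → ℝ) : (Cg U f)ᵀ = Cg U f := by
  unfold Cg
  rw [transpose_mul, transpose_mul, transpose_transpose, diagonal_transpose, Matrix.mul_assoc]

lemma Cg_cong {f g : Fin r → ℝ} (h : ∀ i, f i = g i) : Cg U f = Cg U g := by
  rw [show f = g from funext h]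

lemma Cg_one (hUUt : U * Uᵀ = 1) : Cg U (fun _ => 1) = 1 := by
  unfold Cg
  rw [show (diagonal fun _ => (1:ℝ)) = 1 from diagonal_one, Matrix.mul_one, hUUt]

lemma Cg_sub (f g : Fin r → ℝ) : Cg U f - Cg U g = Cg U (fun i => f i - g i) := by
  unfold Cg
  rw [← diagonal_sub, Matrix.mul_sub, Matrix.sub_mul]

lemma Cg_zero : Cg U (fun _ => 0) = 0 := by
  unfold Cg
  rw [show (diagonal fun _ : Fin r => (0:ℝ)) = 0 from diagonal_zero, Matrix.mul_zero,
    Matrix.zero_mul]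

lemma Cg_psd (f : Fin r → ℝ) (hf : ∀ i, 0 ≤ f i) : (Cg U f).PosSemidef := by
  have h : (diagonal f).PosSemidef := posSemidef_diagonal_iff.mpr hf
  have := h.mul_mul_conjTranspose_same U
  rwa [conjTranspose_eq_transpose_of_trivial] at this

end helperlemmas

/-- Parameterization of `Z_r⁺(Π)` for `Π ∈ Π_{q,r}` with `Π|Π₂₂ ≻ 0`:
`Z ∈ Z_r⁺(Π)` iff `Z = −Π₂₂^†Π₂₁ + ((−Π₂₂)^†)^{1/2} S (Π|Π₂₂)^{1/2} + (I − Π₂₂^†Π₂₂)T`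
for some `S, T` with `SᵀS ≺ I`. -/
theorem stmt_6 {q r : ℕ} (P : Matrix (Fin q ⊕ Fin r) (Fin q ⊕ Fin r) ℝ) (hP : memPi P)
    (hschur : (schurC P).PosDef) (Z : Matrix (Fin r) (Fin q) ℝ) :
    Z ∈ ZrPlusSet P ↔ ∃ S T : Matrix (Fin r) (Fin q) ℝ,
      ((1 : Matrix (Fin q) (Fin q) ℝ) - Sᵀ * S).PosDef ∧
      Z = -(pinv P.toBlocks₂₂ * P.toBlocks₂₁)
          + msqrt (pinv (-P.toBlocks₂₂)) * S * msqrt (schurC P)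
          + ((1 : Matrix (Fin r) (Fin r) ℝ) - pinv P.toBlocks₂₂ * P.toBlocks₂₂) * T := by
  obtain ⟨hPsymm, hNpsd, _, hker⟩ := hP
  obtain ⟨U, d, hd, hUUt, hUtU, hNd⟩ := psd_spectral hNpsd
  have hNC : -P.toBlocks₂₂ = Cg U d := hNd
  have hP22 : P.toBlocks₂₂ = -(Cg U d) := by rw [← hNC, neg_neg]
  set dp : Fin r → ℝ := fun i => if d i = 0 then 0 else (d i)⁻¹ with hdp_def
  set ef : Fin r → ℝ := fun i => if d i = 0 then 0 else 1 with hef_def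
  set sd : Fin r → ℝ := fun i => Real.sqrt (d i) with hsd_def
  set sdp : Fin r → ℝ := fun i => Real.sqrt (dp i) with hsdp_def
  have hdp_nonneg : ∀ i, 0 ≤ dp i := by
    intro i
    by_cases h : d i = 0 <;> simp [hdp_def, h, inv_nonneg.mpr (hd i)]
  -- pinv of -P22 and of P22
  have hpinvN : pinv (-P.toBlocks₂₂) = Cg U dp := by
    rw [hNC]
    apply pinv_eq
    · rw [Cg_mul hUtU, Cg_mul hUtU]
      exact Cg_cong fun i => by by_cases h : d i = 0 <;> simp [hdp_def, h]
    · rw [Cg_mul hUtU, Cg_mul hUtU]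
      exact Cg_cong fun i => by by_cases h : d i = 0 <;> simp [hdp_def, h]
    · rw [Cg_mul hUtU]; exact Cg_transpose _
    · rw [Cg_mul hUtU]; exact Cg_transpose _
  have hpinv22 : pinv P.toBlocks₂₂ = -(Cg U dp) := by
    rw [hP22]
    apply pinv_eq
    · simp only [Matrix.neg_mul, Matrix.mul_neg, neg_neg, Cg_mul hUtU]
      rw [show (fun i => d i * dp i * d i) = d from
        funext fun i => by by_cases h : d i = 0 <;> simp [hdp_def, h]]
    · simp only [Matrix.neg_mul, Matrix.mul_neg, neg_neg, Cg_mul hUtU]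
      rw [show (fun i => dp i * d i * dp i) = dp from
        funext fun i => by by_cases h : d i = 0 <;> simp [hdp_def, h]]
    · simp only [Matrix.neg_mul, Matrix.mul_neg, neg_neg, Cg_mul hUtU]
      exact Cg_transpose _
    · simp only [Matrix.neg_mul, Matrix.mul_neg, neg_neg, Cg_mul hUtU]
      exact Cg_transpose _
  have hE : pinv P.toBlocks₂₂ * P.toBlocks₂₂ = Cg U ef := by
    rw [hpinv22, hP22, Matrix.neg_mul, Matrix.mul_neg, neg_neg, Cg_mul hUtU]
    exact Cg_cong fun i => by
      by_cases h : d i = 0 <;> simp [hdp_def, hef_def, h]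
  have hE2 : P.toBlocks₂₂ * pinv P.toBlocks₂₂ = Cg U ef := by
    rw [hpinv22, hP22, Matrix.neg_mul, Matrix.mul_neg, neg_neg, Cg_mul hUtU]
    exact Cg_cong fun i => by
      by_cases h : d i = 0 <;> simp [hdp_def, hef_def, h]
  have hP21 : P.toBlocks₂₁ = (P.toBlocks₁₂)ᵀ := by
    ext i j
    have := congrFun (congrFun hPsymm (Sum.inr i)) (Sum.inl j)
    simpa [Matrix.toBlocks₂₁, Matrix.toBlocks₁₂] using this.symm
  -- kernel condition
  have hkerE : P.toBlocks₁₂ * Cg U ef = P.toBlocks₁₂ := by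
    have hz : P.toBlocks₂₂ * ((1 : Matrix (Fin r) (Fin r) ℝ) - Cg U ef) = 0 := by
      rw [hP22, ← Cg_one hUUt, Cg_sub, Matrix.neg_mul, Cg_mul hUtU]
      rw [show (fun i => d i * ((fun _ => (1:ℝ)) i - ef i)) = fun _ => (0:ℝ) from
        funext fun i => by by_cases h : d i = 0 <;> simp [hef_def, h]]
      rw [Cg_zero, neg_zero]
    have hzz : P.toBlocks₁₂ * ((1 : Matrix (Fin r) (Fin r) ℝ) - Cg U ef) = 0 := by
      ext i j
      have hcol : P.toBlocks₂₂ *ᵥ (fun k => ((1 : Matrix (Fin r) (Fin r) ℝ) - Cg U ef) k j) = 0 := by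
        funext l
        have := congrFun (congrFun hz l) j
        simpa [Matrix.mulVec, Matrix.mul_apply, dotProduct] using this
      have := congrFun (hker _ hcol) i
      simpa [Matrix.mulVec, Matrix.mul_apply, dotProduct] using this
    rw [Matrix.mul_sub, Matrix.mul_one, sub_eq_zero] at hzz
    exact hzz.symm
  have hEP21 : Cg U ef * P.toBlocks₂₁ = P.toBlocks₂₁ := by
    rw [hP21]
    calc Cg U ef * (P.toBlocks₁₂)ᵀ = ((P.toBlocks₁₂) * (Cg U ef)ᵀ)ᵀ := by
          rw [transpose_mul, transpose_transpose]
      _ = (P.toBlocks₁₂)ᵀ := by rw [Cg_transpose, hkerE]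
  -- qmi expansion
  have hqmi : ∀ Y : Matrix (Fin r) (Fin q) ℝ, qmi P Y =
      P.toBlocks₁₁ + P.toBlocks₁₂ * Y + Yᵀ * P.toBlocks₂₁ + Yᵀ * P.toBlocks₂₂ * Y := by
    intro Y
    conv_lhs => rw [qmi, ← fromBlocks_toBlocks P]
    erw [transpose_fromRows, Matrix.mul_assoc, fromBlocks_mul_fromRows, fromCols_mul_fromRows]
    simp only [transpose_one, Matrix.one_mul, Matrix.mul_one, Matrix.mul_add, Matrix.add_mul,
      ← Matrix.mul_assoc]
    abel
  -- completion of squares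
  set K := pinv P.toBlocks₂₂ with hK_def
  have hKt : Kᵀ = K := by rw [hpinv22, transpose_neg, Cg_transpose]
  have hcomp : ∀ Y : Matrix (Fin r) (Fin q) ℝ,
      qmi P Y = schurC P
        - (Y + K * P.toBlocks₂₁)ᵀ * (-P.toBlocks₂₂) * (Y + K * P.toBlocks₂₁) := by
    intro Y
    have hWt : (Y + K * P.toBlocks₂₁)ᵀ = Yᵀ + P.toBlocks₁₂ * K := by
      rw [transpose_add, transpose_mul, hKt, hP21, transpose_transpose]
    have e1 : P.toBlocks₁₂ * K * P.toBlocks₂₂ = P.toBlocks₁₂ := by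
      rw [Matrix.mul_assoc, hE, hkerE]
    have e2 : P.toBlocks₂₂ * (K * P.toBlocks₂₁) = P.toBlocks₂₁ := by
      rw [← Matrix.mul_assoc, hE2, hEP21]
    have expand : (Yᵀ + P.toBlocks₁₂ * K) * P.toBlocks₂₂ * (Y + K * P.toBlocks₂₁)
        = Yᵀ * P.toBlocks₂₂ * Y + Yᵀ * P.toBlocks₂₁ + P.toBlocks₁₂ * Y
          + P.toBlocks₁₂ * K * P.toBlocks₂₁ := by
      rw [Matrix.add_mul, e1, Matrix.mul_add, Matrix.add_mul, Matrix.add_mul]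
      rw [Matrix.mul_assoc Yᵀ P.toBlocks₂₂ (K * P.toBlocks₂₁), e2,
        ← Matrix.mul_assoc P.toBlocks₁₂ K P.toBlocks₂₁]
      abel
    rw [hqmi Y, hWt, schurC]
    rw [Matrix.mul_neg, Matrix.neg_mul, sub_neg_eq_add, expand]
    abel
  -- msqrt facts
  have hscPsd := hschur.posSemidef
  open scoped MatrixOrder in
  have hMS_eq : msqrt (schurC P) = CFC.sqrt (schurC P) :=
    msqrt_eq (CFC.sqrt_nonneg _).posSemidef (CFC.sqrt_mul_sqrt_self _ hscPsd.nonneg)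
  have hMS2 : msqrt (schurC P) * msqrt (schurC P) = schurC P := by
    open scoped MatrixOrder in
    rw [hMS_eq]; exact CFC.sqrt_mul_sqrt_self _ hscPsd.nonneg
  have hMSpsd : (msqrt (schurC P)).PosSemidef := by
    open scoped MatrixOrder in
    rw [hMS_eq]; exact (CFC.sqrt_nonneg _).posSemidef
  have hMSpd : (msqrt (schurC P)).PosDef := posDef_of_sq hMSpsd (by rw [hMS2]; exact hschur)
  have hMSt : (msqrt (schurC P))ᵀ = msqrt (schurC P) := by
    have := hMSpsd.1
    rwa [Matrix.IsHermitian, conjTranspose_eq_transpose_of_trivial] at this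
  have hMSdet : IsUnit (msqrt (schurC P)).det :=
    isUnit_iff_ne_zero.mpr (ne_of_gt hMSpd.det_pos)
  have hMSinv : msqrt (schurC P) * (msqrt (schurC P))⁻¹ = 1 := Matrix.mul_nonsing_inv _ hMSdet
  have hMSinv' : (msqrt (schurC P))⁻¹ * msqrt (schurC P) = 1 := Matrix.nonsing_inv_mul _ hMSdet
  have hMSinvT : ((msqrt (schurC P))⁻¹)ᵀ = (msqrt (schurC P))⁻¹ := by
    rw [Matrix.transpose_nonsing_inv, hMSt]
  have hmsqrtpN : msqrt (pinv (-P.toBlocks₂₂)) = Cg U sdp := by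
    rw [hpinvN]
    exact msqrt_eq (Cg_psd sdp (fun i => Real.sqrt_nonneg _))
      (by rw [Cg_mul hUtU]
          exact Cg_cong fun i => by simp [hsdp_def, Real.mul_self_sqrt (hdp_nonneg i)])
  -- pointwise matrix products
  have hsd_sd : Cg U sd * Cg U sd = Cg U d := by
    rw [Cg_mul hUtU]; exact Cg_cong fun i => by simp [hsd_def, Real.mul_self_sqrt (hd i)]
  have hsdp_sd : Cg U sdp * Cg U sd = Cg U ef := by
    rw [Cg_mul hUtU]
    refine Cg_cong fun i => ?_
    by_cases h : d i = 0
    · simp [hsdp_def, hsd_def, hdp_def, hef_def, h]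
    · have hpos : 0 < d i := lt_of_le_of_ne (hd i) (Ne.symm h)
      simp only [hsdp_def, hsd_def, hdp_def, hef_def, if_neg h]
      rw [Real.sqrt_inv, inv_mul_cancel₀ (Real.sqrt_ne_zero'.mpr hpos)]
  have hd_sdp : Cg U d * Cg U sdp = Cg U sd := by
    rw [Cg_mul hUtU]
    refine Cg_cong fun i => ?_
    by_cases h : d i = 0
    · simp [hsdp_def, hsd_def, hdp_def, h]
    · simp only [hsdp_def, hsd_def, hdp_def, if_neg h]
      rw [Real.sqrt_inv, ← div_eq_mul_inv, Real.div_sqrt]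
  have hef_sd : Cg U ef * Cg U sd = Cg U sd := by
    rw [Cg_mul hUtU]
    exact Cg_cong fun i => by by_cases h : d i = 0 <;> simp [hef_def, hsd_def, h]
  have hd_ef : Cg U d * Cg U ef = Cg U d := by
    rw [Cg_mul hUtU]
    exact Cg_cong fun i => by by_cases h : d i = 0 <;> simp [hef_def, h]
  constructor
  · intro hZ
    have hZ' : (qmi P Z).PosDef := hZ
    rw [hcomp Z] at hZ'
    set W := Z + K * P.toBlocks₂₁ with hW_def
    refine ⟨Cg U sd * W * (msqrt (schurC P))⁻¹, W, ?_, ?_⟩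
    · have hSt : (Cg U sd * W * (msqrt (schurC P))⁻¹)ᵀ
          = (msqrt (schurC P))⁻¹ * (Wᵀ * Cg U sd) := by
        rw [transpose_mul, transpose_mul, hMSinvT, Cg_transpose]
      have hone : (msqrt (schurC P))⁻¹ * schurC P * (msqrt (schurC P))⁻¹ = 1 := by
        calc (msqrt (schurC P))⁻¹ * schurC P * (msqrt (schurC P))⁻¹
            = (msqrt (schurC P))⁻¹ * (msqrt (schurC P) * msqrt (schurC P))
              * (msqrt (schurC P))⁻¹ := by rw [hMS2]
          _ = ((msqrt (schurC P))⁻¹ * msqrt (schurC P))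
              * (msqrt (schurC P) * (msqrt (schurC P))⁻¹) := by simp only [Matrix.mul_assoc]
          _ = 1 := by rw [hMSinv', hMSinv, Matrix.one_mul]
      have key : (1 : Matrix (Fin q) (Fin q) ℝ)
            - (Cg U sd * W * (msqrt (schurC P))⁻¹)ᵀ * (Cg U sd * W * (msqrt (schurC P))⁻¹)
          = ((msqrt (schurC P))⁻¹)ᵀ * (schurC P - Wᵀ * (-P.toBlocks₂₂) * W)
              * (msqrt (schurC P))⁻¹ := by
        rw [hSt, hMSinvT, Matrix.mul_sub, Matrix.sub_mul]
        congr 1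
        · exact hone.symm
        · rw [hNC, ← hsd_sd]
          simp only [Matrix.mul_assoc]
      rw [key]
      exact pd_conj hZ' (Matrix.isUnit_nonsing_inv_det _ hMSdet)
    · rw [hmsqrtpN, hE]
      have mid : Cg U sdp * (Cg U sd * W * (msqrt (schurC P))⁻¹) * msqrt (schurC P)
          = Cg U ef * W := by
        calc Cg U sdp * (Cg U sd * W * (msqrt (schurC P))⁻¹) * msqrt (schurC P)
            = Cg U sdp * (Cg U sd * (W * ((msqrt (schurC P))⁻¹ * msqrt (schurC P)))) := by
              simp only [Matrix.mul_assoc]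
          _ = Cg U ef * W := by
              rw [hMSinv', Matrix.mul_one, ← Matrix.mul_assoc, hsdp_sd]
      rw [mid, Matrix.sub_mul, Matrix.one_mul, hW_def]
      abel
  · rintro ⟨S, T, hS, hZeq⟩
    show (qmi P Z).PosDef
    rw [hcomp Z]
    have hWW : Z + K * P.toBlocks₂₁
        = Cg U sdp * S * msqrt (schurC P) + (1 - Cg U ef) * T := by
      rw [hZeq, hmsqrtpN, hE]
      abel
    rw [hWW]
    have hNW : (-P.toBlocks₂₂) * (Cg U sdp * S * msqrt (schurC P) + (1 - Cg U ef) * T)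
        = Cg U sd * S * msqrt (schurC P) := by
      rw [hNC, Matrix.mul_add]
      have t1 : Cg U d * (Cg U sdp * S * msqrt (schurC P))
          = Cg U sd * S * msqrt (schurC P) := by
        simp only [← Matrix.mul_assoc]
        rw [hd_sdp]
      have t2 : Cg U d * ((1 - Cg U ef) * T) = 0 := by
        rw [← Matrix.mul_assoc, Matrix.mul_sub, Matrix.mul_one, hd_ef, sub_self,
          Matrix.zero_mul]
      rw [t1, t2, add_zero]
    have hWt : (Cg U sdp * S * msqrt (schurC P) + (1 - Cg U ef) * T)ᵀ
        = msqrt (schurC P) * (Sᵀ * Cg U sdp) + Tᵀ * (1 - Cg U ef) := by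
      simp only [transpose_add, transpose_mul, transpose_sub, transpose_one, hMSt,
        Cg_transpose, Matrix.mul_assoc]
    have hWNW : (Cg U sdp * S * msqrt (schurC P) + (1 - Cg U ef) * T)ᵀ * (-P.toBlocks₂₂)
          * (Cg U sdp * S * msqrt (schurC P) + (1 - Cg U ef) * T)
        = msqrt (schurC P) * (Sᵀ * Cg U ef * S) * msqrt (schurC P) := by
      rw [Matrix.mul_assoc, hNW, hWt, Matrix.add_mul]
      have u2 : Tᵀ * (1 - Cg U ef) * (Cg U sd * S * msqrt (schurC P)) = 0 := by
        have hz0 : (1 - Cg U ef) * Cg U sd = 0 := by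
          rw [Matrix.sub_mul, Matrix.one_mul, hef_sd, sub_self]
        calc Tᵀ * (1 - Cg U ef) * (Cg U sd * S * msqrt (schurC P))
            = Tᵀ * ((1 - Cg U ef) * Cg U sd) * (S * msqrt (schurC P)) := by
              simp only [Matrix.mul_assoc]
          _ = 0 := by rw [hz0, Matrix.mul_zero, Matrix.zero_mul]
      have u1 : msqrt (schurC P) * (Sᵀ * Cg U sdp) * (Cg U sd * S * msqrt (schurC P))
          = msqrt (schurC P) * (Sᵀ * Cg U ef * S) * msqrt (schurC P) := by
        calc msqrt (schurC P) * (Sᵀ * Cg U sdp) * (Cg U sd * S * msqrt (schurC P))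
            = msqrt (schurC P) * (Sᵀ * (Cg U sdp * Cg U sd) * S) * msqrt (schurC P) := by
              simp only [Matrix.mul_assoc]
          _ = _ := by rw [hsdp_sd]
      rw [u1, u2, add_zero]
    rw [hWNW]
    have hce : Cg U (fun i => 1 - ef i) = 1 - Cg U ef := by
      rw [← Cg_sub, Cg_one hUUt]
    have hinner : schurC P - msqrt (schurC P) * (Sᵀ * Cg U ef * S) * msqrt (schurC P)
        = (msqrt (schurC P))ᵀ * (((1 : Matrix (Fin q) (Fin q) ℝ) - Sᵀ * S)
            + Sᵀ * (Cg U (fun i => 1 - ef i)) * S) * msqrt (schurC P) := by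
      rw [hMSt]
      have hsum : ((1 : Matrix (Fin q) (Fin q) ℝ) - Sᵀ * S)
            + Sᵀ * (Cg U (fun i => 1 - ef i)) * S
          = 1 - Sᵀ * Cg U ef * S := by
        rw [hce, Matrix.mul_sub, Matrix.sub_mul, Matrix.mul_one]
        abel
      rw [hsum, Matrix.mul_sub, Matrix.sub_mul, Matrix.mul_one, hMS2]
    rw [hinner]
    refine pd_conj (hS.add_posSemidef (psd_conj (Cg_psd _ fun i => ?_) S)) hMSdet
    by_cases h : d i = 0 <;> simp [hef_def, h]
end

section
/- Let Π ∈ Π_{q,r} and W ∈ ℝ^{q×p}. Assume that W has full column rank and that Z_r⁺(Π) is nonempty. Then Z_r⁺(Π)·W = Z_r⁺(Π_W), where Z_r⁺(Π)·W := { ZW : Z ∈ Z_r⁺(Π) }. -/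
open Matrix
open scoped Classical

section Helpers

lemma real_conjT {m n : ℕ} (A : Matrix (Fin m) (Fin n) ℝ) : Aᴴ = Aᵀ :=
  conjTranspose_eq_transpose_of_trivial A

lemma exists_penrose {n : ℕ} {A : Matrix (Fin n) (Fin n) ℝ} (hA : A.IsSymm) :
    ∃ B : Matrix (Fin n) (Fin n) ℝ,
      A * B * A = A ∧ B * A * B = B ∧ (A * B)ᵀ = A * B ∧ (B * A)ᵀ = B * A := by
  have hH : A.IsHermitian := by rw [Matrix.IsHermitian, real_conjT]; exact hA
  set U : Matrix (Fin n) (Fin n) ℝ := (hH.eigenvectorUnitary : Matrix (Fin n) (Fin n) ℝ) with hU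
  have hUU' : star U * U = 1 := (Matrix.mem_unitaryGroup_iff').mp hH.eigenvectorUnitary.2
  set d : Fin n → ℝ := hH.eigenvalues with hd
  have hAspec : A = U * diagonal d * star U := by
    have := hH.spectral_theorem
    simpa using this
  set g : Fin n → ℝ := fun i => if d i = 0 then 0 else (d i)⁻¹ with hg
  have key : ∀ e f : Fin n → ℝ, (U * diagonal e * star U) * (U * diagonal f * star U)
      = U * diagonal (fun i => e i * f i) * star U := by
    intro e f
    have : (U * diagonal e * star U) * (U * diagonal f * star U)
        = U * (diagonal e * (star U * U) * diagonal f) * star U := by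
      simp only [Matrix.mul_assoc]
    rw [this, hUU', Matrix.mul_one, diagonal_mul_diagonal]
  have keyT : ∀ e : Fin n → ℝ, (U * diagonal e * star U)ᵀ = U * diagonal e * star U := by
    intro e
    have hsU : star U = Uᵀ := real_conjT U
    rw [hsU, Matrix.transpose_mul, Matrix.transpose_mul, Matrix.transpose_transpose,
      Matrix.diagonal_transpose, Matrix.mul_assoc]
  have hdgd : (fun i => d i * g i * d i) = d := by
    funext i; by_cases h : d i = 0 <;> simp [hg, h]
  have hgdg : (fun i => g i * d i * g i) = g := by
    funext i; by_cases h : d i = 0 <;> simp [hg, h]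
  refine ⟨U * diagonal g * star U, ?_, ?_, ?_, ?_⟩
  · rw [hAspec, key, key, hdgd]
  · rw [hAspec, key, key, hgdg]
  · rw [hAspec, key, keyT]
  · rw [hAspec, key, keyT]

lemma pinv_spec {n : ℕ} {A : Matrix (Fin n) (Fin n) ℝ} (hA : A.IsSymm) :
    A * pinv A * A = A ∧ pinv A * A * pinv A = pinv A ∧
      (A * pinv A)ᵀ = A * pinv A ∧ (pinv A * A)ᵀ = pinv A * A := by
  have h := exists_penrose hA
  rw [pinv, dif_pos h]
  exact h.choose_spec

lemma msqrt_spec {n : ℕ} {S : Matrix (Fin n) (Fin n) ℝ} (hS : S.PosDef) :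
    (msqrt S).PosDef ∧ msqrt S * msqrt S = S := by
  have h : ∃ B : Matrix (Fin n) (Fin n) ℝ, B.PosSemidef ∧ B * B = S :=
    by open scoped MatrixOrder in exact ⟨CFC.sqrt S, (CFC.sqrt_nonneg S).posSemidef, CFC.sqrt_mul_sqrt_self S hS.posSemidef.nonneg⟩
  rw [msqrt, dif_pos h]
  obtain ⟨hB, hBB⟩ := h.choose_spec
  refine ⟨PosDef.of_dotProduct_mulVec_pos hB.1 (fun x hx => ?_), hBB⟩
  rcases lt_or_eq_of_le (hB.dotProduct_mulVec_nonneg x) with hlt | heq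
  · exact hlt
  · exfalso
    have hBx : h.choose *ᵥ x = 0 := (hB.dotProduct_mulVec_zero_iff x).mp heq.symm
    have hSx : S *ᵥ x = 0 := by
      rw [← hBB, ← Matrix.mulVec_mulVec, hBx, Matrix.mulVec_zero]
    have := hS.dotProduct_mulVec_pos hx
    rw [hSx, dotProduct_zero] at this
    exact lt_irrefl 0 this

lemma herm_to_symm {n : ℕ} {A : Matrix (Fin n) (Fin n) ℝ} (h : A.IsHermitian) : Aᵀ = A := by
  rw [← real_conjT]; exact h

lemma psd_conj_s8 {n m : ℕ} {M : Matrix (Fin n) (Fin n) ℝ} (hM : M.PosSemidef)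
    (C : Matrix (Fin n) (Fin m) ℝ) : (Cᵀ * M * C).PosSemidef := by
  have := hM.conjTranspose_mul_mul_same C
  rwa [real_conjT] at this

lemma mulVec_inj_of_rank {q p : ℕ} (W : Matrix (Fin q) (Fin p) ℝ) (hW : W.rank = p) :
    Function.Injective W.mulVec := by
  rw [show W.mulVec = W.mulVecLin from rfl, ← LinearMap.ker_eq_bot]
  have h1 := LinearMap.finrank_range_add_finrank_ker W.mulVecLin
  rw [show Module.finrank ℝ (LinearMap.range W.mulVecLin) = W.rank from rfl, hW] at h1
  have h2 : Module.finrank ℝ (Fin p → ℝ) = p := by simp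
  rw [h2] at h1
  have h3 : Module.finrank ℝ (LinearMap.ker W.mulVecLin) = 0 := by omega
  exact Submodule.finrank_eq_zero.mp h3

lemma pd_conj_s8 {n m : ℕ} {M : Matrix (Fin n) (Fin n) ℝ} (hM : M.PosDef)
    (C : Matrix (Fin n) (Fin m) ℝ) (hC : Function.Injective C.mulVec) :
    (Cᵀ * M * C).PosDef := by
  refine PosDef.of_dotProduct_mulVec_pos ?_ ?_
  · have := isHermitian_conjTranspose_mul_mul C hM.1
    rwa [real_conjT] at this
  · intro x hx
    have hCx : C *ᵥ x ≠ 0 := by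
      intro h
      exact hx (hC (h.trans (Matrix.mulVec_zero C).symm))
    have := hM.dotProduct_mulVec_pos hCx
    simpa only [star_trivial, ← Matrix.mulVec_mulVec, Matrix.dotProduct_mulVec,
      Matrix.vecMul_transpose, Matrix.dotProduct_mulVec (C *ᵥ x)] using this

lemma dot_conj {n m : ℕ} (N : Matrix (Fin m) (Fin m) ℝ) (C : Matrix (Fin m) (Fin n) ℝ)
    (x : Fin n → ℝ) :
    x ⬝ᵥ ((Cᵀ * N * C) *ᵥ x) = (C *ᵥ x) ⬝ᵥ (N *ᵥ (C *ᵥ x)) := by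
  simp only [← Matrix.mulVec_mulVec, Matrix.dotProduct_mulVec x, Matrix.vecMul_transpose,
    ← Matrix.dotProduct_mulVec (C *ᵥ x)]

lemma qmi_eq {q r : ℕ} (P : Matrix (Fin q ⊕ Fin r) (Fin q ⊕ Fin r) ℝ)
    (Z : Matrix (Fin r) (Fin q) ℝ) :
    qmi P Z = P.toBlocks₁₁ + P.toBlocks₁₂ * Z + Zᵀ * P.toBlocks₂₁ + Zᵀ * (P.toBlocks₂₂ * Z) := by
  refine (Matrix.mul_assoc (fromRows (1 : Matrix (Fin q) (Fin q) ℝ) Z)ᵀ P (fromRows 1 Z)).trans ?_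
  rw [← Matrix.fromBlocks_toBlocks P,
    Matrix.fromBlocks_mul_fromRows, Matrix.transpose_fromRows, Matrix.transpose_one,
    Matrix.fromCols_mul_fromRows]
  simp only [Matrix.mul_one, Matrix.one_mul, Matrix.mul_add]
  abel

end Helpers

/-- Strict projection result. For `Π ∈ Π_{q,r}` and `W ∈ ℝ^{q×p}` of
full column rank, if `Z_r⁺(Π)` is nonempty, then `Z_r⁺(Π)·W = Z_r⁺(Π_W)`. -/
theorem stmt_8 {q r p : ℕ} (P : Matrix (Fin q ⊕ Fin r) (Fin q ⊕ Fin r) ℝ)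
    (W : Matrix (Fin q) (Fin p) ℝ) (hP : memPi P) (hW : W.rank = p)
    (hne : (ZrPlusSet P).Nonempty) :
    (fun Z => Z * W) '' ZrPlusSet P =
      ZrPlusSet (fromBlocks (Wᵀ * P.toBlocks₁₁ * W) (Wᵀ * P.toBlocks₁₂)
        (P.toBlocks₂₁ * W) P.toBlocks₂₂) := by
  obtain ⟨hSym, hNeg, hSchur, hker⟩ := hP
  have hsym' : ∀ a b, P a b = P b a := by
    intro a b
    have h := congrFun (congrFun hSym a) b
    rw [Matrix.transpose_apply] at h
    exact h.symm
  set A := P.toBlocks₂₂ with hAdef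
  set L := P.toBlocks₁₂ with hLdef
  have hL21 : P.toBlocks₂₁ = Lᵀ := by
    ext i j
    simp only [Matrix.toBlocks₂₁, Matrix.toBlocks₁₂, hLdef, Matrix.transpose_apply,
      Matrix.of_apply]
    exact hsym' (Sum.inr i) (Sum.inl j)
  have hAsym : A.IsSymm := by
    ext i j
    simp only [Matrix.transpose_apply, hAdef, Matrix.toBlocks₂₂, Matrix.of_apply]
    exact hsym' (Sum.inr j) (Sum.inr i)
  obtain ⟨h1, h2, h3, h4⟩ := pinv_spec hAsym
  set B := pinv A with hBdef
  have h6 : (1 - A * B)ᵀ = 1 - A * B := by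
    rw [Matrix.transpose_sub, Matrix.transpose_one, h3]
  have h5 : (1 - A * B) * A = 0 := by
    rw [Matrix.sub_mul, Matrix.one_mul, h1, sub_self]
  have h7 : A * (1 - A * B) = 0 := by
    calc A * (1 - A * B) = ((1 - A * B)ᵀ * Aᵀ)ᵀ := by
          rw [← Matrix.transpose_mul, Matrix.transpose_transpose]
      _ = 0 := by rw [h6, hAsym, h5, Matrix.transpose_zero]
  have hk' : L * (A * B) = L := by
    have h9 : L * (1 - A * B) = 0 := by
      ext i j
      have hcol : A *ᵥ (fun k => (1 - A * B) k j) = 0 := by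
        funext l
        have h := congrFun (congrFun h7 l) j
        simpa [Matrix.mul_apply, Matrix.mulVec, dotProduct] using h
      have h10 := hker _ hcol
      have h11 := congrFun h10 i
      simpa [Matrix.mul_apply, Matrix.mulVec, dotProduct] using h11
    have h12 : L - L * (A * B) = 0 := by
      rw [← h9, Matrix.mul_sub, Matrix.mul_one]
    have := sub_eq_zero.mp h12
    exact this.symm
  set K := B * Lᵀ with hKdef
  have hABLt : (A * B) * Lᵀ = Lᵀ := by
    have h13 := congrArg Matrix.transpose hk'
    rwa [Matrix.transpose_mul, h3] at h13
  have hAK : A * K = Lᵀ := by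
    rw [hKdef, ← Matrix.mul_assoc]
    exact hABLt
  have hKA : Kᵀ * A = L := by
    have h13 := congrArg Matrix.transpose hAK
    rwa [Matrix.transpose_mul, hAsym, Matrix.transpose_transpose] at h13
  have hS0 : schurC P = P.toBlocks₁₁ - L * K := by
    rw [schurC, hL21, Matrix.mul_assoc]
  have e3 : Kᵀ * Lᵀ = L * K := by rw [← hAK, ← Matrix.mul_assoc, hKA]
  have id1 : ∀ Z, qmi P Z = schurC P + (Z + K)ᵀ * (A * (Z + K)) := by
    intro Z
    have e1 : A * (Z + K) = A * Z + Lᵀ := by rw [Matrix.mul_add, hAK]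
    have e2 : Kᵀ * (A * Z) = L * Z := by rw [← Matrix.mul_assoc, hKA]
    rw [qmi_eq, hS0, hL21, e1, Matrix.transpose_add, Matrix.add_mul, Matrix.mul_add,
      Matrix.mul_add, e2, e3]
    abel
  rw [hL21]
  set Q := fromBlocks (Wᵀ * P.toBlocks₁₁ * W) (Wᵀ * L) (Lᵀ * W) A with hQdef
  have id2 : ∀ Z', qmi Q Z' = Wᵀ * schurC P * W + (Z' + K * W)ᵀ * (A * (Z' + K * W)) := by
    intro Z'
    have e1 : A * (Z' + K * W) = A * Z' + Lᵀ * W := by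
      rw [Matrix.mul_add, ← Matrix.mul_assoc, hAK]
    have e2 : (K * W)ᵀ * (A * Z') = Wᵀ * (L * Z') := by
      rw [Matrix.transpose_mul, Matrix.mul_assoc, ← Matrix.mul_assoc Kᵀ, hKA]
    have e4 : (K * W)ᵀ * (Lᵀ * W) = Wᵀ * (L * K * W) := by
      rw [Matrix.transpose_mul, Matrix.mul_assoc, ← Matrix.mul_assoc Kᵀ, e3, Matrix.mul_assoc]
    rw [qmi_eq, hQdef]
    simp only [Matrix.toBlocks_fromBlocks₁₁, Matrix.toBlocks_fromBlocks₁₂,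
      Matrix.toBlocks_fromBlocks₂₁, Matrix.toBlocks_fromBlocks₂₂]
    rw [hS0, e1, Matrix.transpose_add, Matrix.add_mul, Matrix.mul_add, Matrix.mul_add, e2, e4]
    simp only [Matrix.sub_mul, Matrix.mul_sub, Matrix.mul_add, Matrix.add_mul,
      Matrix.mul_assoc]
    abel
  obtain ⟨Z₀, hZ₀⟩ := hne
  have hZ₀' : (qmi P Z₀).PosDef := hZ₀
  have hS_pd : (schurC P).PosDef := by
    have hneg : (Z₀ + K)ᵀ * (-A) * (Z₀ + K) = -((Z₀ + K)ᵀ * (A * (Z₀ + K))) := by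
      simp only [Matrix.mul_assoc, Matrix.neg_mul, Matrix.mul_neg]
    have heq : schurC P = qmi P Z₀ + (Z₀ + K)ᵀ * (-A) * (Z₀ + K) := by
      rw [id1 Z₀, hneg]; abel
    rw [heq]
    exact hZ₀'.add_posSemidef (psd_conj_s8 hNeg (Z₀ + K))
  have hWinj := mulVec_inj_of_rank W hW
  have fwd : ∀ Z, qmi Q (Z * W) = Wᵀ * qmi P Z * W := by
    intro Z
    rw [id2, id1, ← Matrix.add_mul]
    simp only [Matrix.transpose_mul, Matrix.transpose_add, Matrix.mul_add, Matrix.add_mul,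
      Matrix.mul_assoc]
  apply Set.Subset.antisymm
  · rintro _ ⟨Z, hZ, rfl⟩
    have hZ' : (qmi P Z).PosDef := hZ
    show (qmi Q (Z * W)).PosDef
    rw [fwd]
    exact pd_conj_s8 hZ' W hWinj
  · intro Z' hZ'
    have hE : (qmi Q Z').PosDef := hZ'
    have hEsym : (qmi Q Z')ᵀ = qmi Q Z' := herm_to_symm hE.1
    obtain ⟨hR_pd, hRR⟩ := msqrt_spec hS_pd
    set R := msqrt (schurC P) with hRdef
    have hRsym : Rᵀ = R := herm_to_symm hR_pd.1
    have hRinj : Function.Injective R.mulVec :=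
      Matrix.mulVec_injective_iff_isUnit.mpr hR_pd.isUnit
    set T := R * W with hTdef
    set M := Wᵀ * schurC P * W with hMdef
    have hM_pd : M.PosDef := pd_conj_s8 hS_pd W hWinj
    have hMdet : IsUnit M.det := (Matrix.isUnit_iff_isUnit_det M).mp hM_pd.isUnit
    have hMinv : M⁻¹ * M = 1 := Matrix.nonsing_inv_mul M hMdet
    have hMinv' : M * M⁻¹ = 1 := Matrix.mul_nonsing_inv M hMdet
    have hMT : Tᵀ * T = M := by
      show (R * W)ᵀ * (R * W) = Wᵀ * schurC P * W
      rw [Matrix.transpose_mul, hRsym, ← hRR]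
      simp only [Matrix.mul_assoc]
    have hMsym : M⁻¹ᵀ = M⁻¹ := by
      rw [Matrix.transpose_nonsing_inv]
      congr 1
      exact herm_to_symm hM_pd.1
    set Yt := Z' + K * W with hYtdef
    have hYAY : Ytᵀ * (A * Yt) = qmi Q Z' - M := by
      rw [id2 Z']; abel
    set F := M⁻¹ * Tᵀ with hFdef
    have hFT : Fᵀ = T * M⁻¹ := by
      rw [hFdef, Matrix.transpose_mul, Matrix.transpose_transpose, hMsym]
    have hFT2 : F * T = 1 := by
      rw [hFdef, Matrix.mul_assoc, hMT, hMinv]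
    set V := Yt * F with hVdef
    have hMF : M * F = Tᵀ := by rw [hFdef, ← Matrix.mul_assoc, hMinv', Matrix.one_mul]
    set E := qmi Q Z' with hEdef
    have hQsym : (T * F)ᵀ = T * F := by
      rw [Matrix.transpose_mul, hFT, hFdef, Matrix.mul_assoc]
    have hkey : Vᵀ * (A * V) = Fᵀ * (E * F) - T * F := by
      have hAV : A * V = (A * Yt) * F := by rw [hVdef, ← Matrix.mul_assoc]
      rw [hVdef, hAV, Matrix.transpose_mul, Matrix.mul_assoc, ← Matrix.mul_assoc Ytᵀ, hYAY,
        Matrix.sub_mul, Matrix.mul_sub, hMF, ← Matrix.transpose_mul, hQsym]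
    refine ⟨V * R - K, ?_, ?_⟩
    · show (qmi P (V * R - K)).PosDef
      have hZK : V * R - K + K = V * R := by abel
      rw [id1, hZK]
      set G := (1 - T * F) + Fᵀ * (E * F) with hGdef
      have hconj : (V * R)ᵀ * (A * (V * R)) = R * (Vᵀ * (A * V)) * R := by
        rw [Matrix.transpose_mul, hRsym]
        simp only [Matrix.mul_assoc]
      have hRGR : schurC P + (V * R)ᵀ * (A * (V * R)) = Rᵀ * G * R := by
        rw [hconj, hkey, hGdef, hRsym]
        have hex : R * ((1 - T * F) + Fᵀ * (E * F)) * R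
            = (R * R - R * (T * F) * R) + R * (Fᵀ * (E * F)) * R := by
          simp only [Matrix.mul_add, Matrix.add_mul, Matrix.mul_sub, Matrix.sub_mul,
            Matrix.mul_one, Matrix.one_mul]
        rw [hex, hRR, Matrix.mul_sub, Matrix.sub_mul]
        abel
      rw [hRGR]
      have hQQ : (T * F) * (T * F) = T * F := by
        rw [Matrix.mul_assoc T F, ← Matrix.mul_assoc F, hFT2, Matrix.one_mul]
      have hH : (1 : Matrix (Fin q) (Fin q) ℝ) - T * F = (1 - T * F)ᵀ * (1 - T * F) := by
        rw [Matrix.transpose_sub, Matrix.transpose_one, hQsym, Matrix.sub_mul,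
          Matrix.one_mul, Matrix.mul_sub, Matrix.mul_one, hQQ]
        abel
      have hH_psd : ((1 : Matrix (Fin q) (Fin q) ℝ) - T * F).PosSemidef := by
        rw [hH, ← real_conjT]
        exact Matrix.posSemidef_conjTranspose_mul_self _
      have hGsym : G.IsHermitian := by
        show Gᴴ = G
        rw [real_conjT, hGdef, Matrix.transpose_add, Matrix.transpose_sub,
          Matrix.transpose_one, hQsym]
        congr 1
        rw [Matrix.transpose_mul, Matrix.transpose_mul, Matrix.transpose_transpose,
          hEsym, Matrix.mul_assoc]
      have hG_pd : G.PosDef := by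
        refine PosDef.of_dotProduct_mulVec_pos hGsym (fun x hx => ?_)
        have hsum : x ⬝ᵥ (G *ᵥ x)
            = x ⬝ᵥ ((1 - T * F) *ᵥ x) + (F *ᵥ x) ⬝ᵥ (E *ᵥ (F *ᵥ x)) := by
          rw [hGdef, Matrix.add_mulVec, dotProduct_add, ← Matrix.mul_assoc Fᵀ E F,
            dot_conj]
        have hterm1 : 0 ≤ x ⬝ᵥ ((1 - T * F) *ᵥ x) := by
          simpa using hH_psd.dotProduct_mulVec_nonneg x
        rw [star_trivial, hsum]
        by_cases hFx : F *ᵥ x = 0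
        · have hQx : (T * F) *ᵥ x = 0 := by
            rw [← Matrix.mulVec_mulVec, hFx, Matrix.mulVec_zero]
          have hax : x ⬝ᵥ ((1 - T * F) *ᵥ x) = x ⬝ᵥ x := by
            rw [Matrix.sub_mulVec, hQx, Matrix.one_mulVec, sub_zero]
          rw [hax, hFx]
          simp only [dotProduct_zero, zero_dotProduct, add_zero,
            Matrix.mulVec_zero]
          have hnz : x ⬝ᵥ x ≠ 0 := fun h => hx (dotProduct_self_eq_zero.mp h)
          have hge : 0 ≤ x ⬝ᵥ x :=
            Finset.sum_nonneg fun i _ => mul_self_nonneg (x i)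
          exact lt_of_le_of_ne hge (Ne.symm hnz)
        · have h2' : 0 < (F *ᵥ x) ⬝ᵥ (E *ᵥ (F *ᵥ x)) := by
            simpa using hE.dotProduct_mulVec_pos hFx
          linarith
      exact pd_conj_s8 hG_pd R hRinj
    · show (V * R - K) * W = Z'
      rw [Matrix.sub_mul]
      have hVT : V * R * W = Yt := by
        rw [Matrix.mul_assoc, ← hTdef, hVdef, Matrix.mul_assoc, hFT2, Matrix.mul_one]
      rw [hVT, hYtdef]
      abel
end
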